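/- Let a₁, …, a_m be real numbers and suppose ξ ∈ ℝ satisfies 1 + ξ a_i > 0 for all i and Σ_{i=1}^m a_i/(1 + ξ a_i) = 0. Define p_i* = m⁻¹ (1 + ξ a_i)⁻¹. Then: (i) p_i* > 0 for all i, Σ_{i=1}^m p_i* = 1, and Σ_{i=1}^m p_i* a_i = 0; and (ii) for every vector (p₁, …, p_m) with p_i > 0, Σ_{i=1}^m p_i = 1, and Σ_{i=1}^m p_i a_i = 0, one has Σ_{i=1}^m log p_i ≤ Σ_{i=1}^m log p_i*, with equality if and only if p_i = p_i* for all i. -/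

import Mathlib

/-- The Lagrange-multiplier solution of the empirical-likelihood inner optimization:
`pᵢ* = m⁻¹ (1 + ξ aᵢ)⁻¹` are positive probability weights satisfying the moment
constraint, and they uniquely maximize `Σ log pᵢ` among all such weights. -/
theorem el_inner_optimization (m : ℕ) (hm : 0 < m) (a : Fin m → ℝ) (ξ : ℝ)
    (hpos : ∀ i, 0 < 1 + ξ * a i)
    (hroot : ∑ i, a i / (1 + ξ * a i) = 0) :
    (∀ i, 0 < (m : ℝ)⁻¹ * (1 + ξ * a i)⁻¹) ∧
      (∑ i, (m : ℝ)⁻¹ * (1 + ξ * a i)⁻¹ = 1) ∧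
      (∑ i, (m : ℝ)⁻¹ * (1 + ξ * a i)⁻¹ * a i = 0) ∧
      ∀ p : Fin m → ℝ, (∀ i, 0 < p i) → ∑ i, p i = 1 → ∑ i, p i * a i = 0 →
        (∑ i, Real.log (p i) ≤ ∑ i, Real.log ((m : ℝ)⁻¹ * (1 + ξ * a i)⁻¹)) ∧
          (∑ i, Real.log (p i) = ∑ i, Real.log ((m : ℝ)⁻¹ * (1 + ξ * a i)⁻¹)
            ↔ ∀ i, p i = (m : ℝ)⁻¹ * (1 + ξ * a i)⁻¹) := by
  have hm' : (m : ℝ) ≠ 0 := Nat.cast_ne_zero.mpr hm.ne'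
  have hmpos : (0 : ℝ) < m := Nat.cast_pos.mpr hm
  set q : Fin m → ℝ := fun i => (m : ℝ)⁻¹ * (1 + ξ * a i)⁻¹ with hq
  have hqpos : ∀ i, 0 < q i := fun i =>
    mul_pos (inv_pos.mpr hmpos) (inv_pos.mpr (hpos i))
  have hinv : ∀ i, (1 + ξ * a i)⁻¹ = 1 - ξ * (a i / (1 + ξ * a i)) := by
    intro i
    have h := (hpos i).ne'
    field_simp
    ring
  have hS : ∑ i, (1 + ξ * a i)⁻¹ = (m : ℝ) := by
    rw [Finset.sum_congr rfl (fun i _ => hinv i), Finset.sum_sub_distrib,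
      ← Finset.mul_sum, hroot, Finset.sum_const]
    simp
  have hsum1 : ∑ i, q i = 1 := by
    simp only [hq, ← Finset.mul_sum, hS, inv_mul_cancel₀ hm']
  have hmom : ∑ i, q i * a i = 0 := by
    have : ∀ i, q i * a i = (m : ℝ)⁻¹ * (a i / (1 + ξ * a i)) := by
      intro i
      simp only [hq]
      field_simp
    rw [Finset.sum_congr rfl (fun i _ => this i), ← Finset.mul_sum, hroot, mul_zero]
  refine ⟨hqpos, hsum1, hmom, ?_⟩
  intro p hppos hpsum hpmom
  -- ratio sum
  have hratio : ∀ i, p i / q i = (m : ℝ) * p i + (m : ℝ) * ξ * (p i * a i) := by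
    intro i
    have h1 : q i = ((m : ℝ) * (1 + ξ * a i))⁻¹ := by rw [hq]; rw [mul_inv]
    rw [h1, div_inv_eq_mul]
    ring
  have hratsum : ∑ i, (p i / q i - 1) = 0 := by
    rw [Finset.sum_sub_distrib, Finset.sum_congr rfl (fun i _ => hratio i),
      Finset.sum_add_distrib, ← Finset.mul_sum, ← Finset.mul_sum, hpsum, hpmom,
      Finset.sum_const]
    simp
  have hle : ∀ i ∈ Finset.univ, Real.log (p i) - Real.log (q i) ≤ p i / q i - 1 := by
    intro i _
    rw [← Real.log_div (hppos i).ne' (hqpos i).ne']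
    exact Real.log_le_sub_one_of_pos (div_pos (hppos i) (hqpos i))
  have hmain : ∑ i, (Real.log (p i) - Real.log (q i)) ≤ 0 := by
    rw [← hratsum]
    exact Finset.sum_le_sum hle
  rw [Finset.sum_sub_distrib] at hmain
  constructor
  · linarith
  · constructor
    · intro heq
      by_contra hne
      push_neg at hne
      obtain ⟨j, hj⟩ := hne
      have hstrict : Real.log (p j) - Real.log (q j) < p j / q j - 1 := by
        rw [← Real.log_div (hppos j).ne' (hqpos j).ne']
        refine Real.log_lt_sub_one_of_pos (div_pos (hppos j) (hqpos j)) ?_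
        rw [Ne, div_eq_one_iff_eq (hqpos j).ne']
        exact hj
      have : ∑ i, (Real.log (p i) - Real.log (q i)) < ∑ i, (p i / q i - 1) :=
        Finset.sum_lt_sum hle ⟨j, Finset.mem_univ j, hstrict⟩
      rw [hratsum, Finset.sum_sub_distrib] at this
      linarith [this, heq.ge, heq.le]
    · intro h
      exact Finset.sum_congr rfl fun i _ => by rw [h i]
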